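/- Assume n ≥ 2, every component type I k has at least two elements, and f : In → O is distributed data-minimal. Then φ_dm is semantically gray-box monitorable for satisfaction in Sys f — that is, every finite U ⊆ graph f has a finite V with U ⊆ V ⊆ graph f such that V permanently satisfies φ_dm in Sys f — if and only if the input type In is finite. -/

import Mathlib

/-- A set `T` of input/output traces satisfies the distributed-data-minimality
hyperproperty `φ_dm`. -/
def PhiDM {n : ℕ} {I : Fin n → Type*} {O : Type*}
    (T : Set ((∀ k, I k) × O)) : Prop :=
  ∀ i : Fin n, ∀ u ∈ T, ∀ u' ∈ T, u.1 i ≠ u'.1 i →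
    ∃ v ∈ T, ∃ v' ∈ T, v.1 i = u.1 i ∧ v'.1 i = u'.1 i ∧
      (∀ k, k ≠ i → v.1 k = v'.1 k) ∧ v.2 ≠ v'.2

/-- The function `f` is distributed data-minimal (DDM). -/
def DDM {n : ℕ} {I : Fin n → Type*} {O : Type*}
    (f : (∀ k, I k) → O) : Prop :=
  ∀ i : Fin n, ∀ x y : I i, x ≠ y →
    ∃ z : ∀ k, I k, f (Function.update z i x) ≠ f (Function.update z i y)

/-- The graph of `f`: the set of its valid input/output pairs. -/
def graphOf {n : ℕ} {I : Fin n → Type*} {O : Type*}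
    (f : (∀ k, I k) → O) : Set ((∀ k, I k) × O) :=
  {p | p.2 = f p.1}

theorem ddm_graybox_monitorable_for_satisfaction_iff_finite
    {n : ℕ} {I : Fin n → Type*} {O : Type*}
    (hn : 2 ≤ n) (hI : ∀ k : Fin n, ∃ x y : I k, x ≠ y)
    (f : (∀ k, I k) → O) (hf : DDM f) :
    (∀ U : Set ((∀ k, I k) × O), U.Finite → U ⊆ graphOf f →
      ∃ V : Set ((∀ k, I k) × O), U ⊆ V ∧ V ⊆ graphOf f ∧ V.Finite ∧
        (∀ B : Set ((∀ k, I k) × O), V ⊆ B → B ⊆ graphOf f → PhiDM B))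
    ↔ Finite (∀ k, I k) := by

  have hne : ∀ k, Nonempty (I k) := fun k => ⟨(hI k).choose⟩
  constructor
  · intro h
    by_contra hfin
    have hinf : ∃ i, Infinite (I i) := by
      by_contra hc
      push_neg at hc
      have : ∀ i, Finite (I i) := fun i => hc i
      exact hfin (Pi.finite)
    obtain ⟨i, hInf⟩ := hinf
    obtain ⟨V, -, hVg, hVfin, hV⟩ := h ∅ Set.finite_empty (Set.empty_subset _)
    have hS : ((fun v : (∀ k, I k) × O => v.1 i) '' V).Finite := hVfin.image _
    obtain ⟨x, hx, x', hx', hxx'⟩ := hS.infinite_compl.nontrivial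
    simp only [Set.mem_compl_iff] at hx hx'
    have hnt : Nontrivial (Fin n) := by
      refine ⟨⟨0, by omega⟩, ⟨1, by omega⟩, ?_⟩
      simp [Fin.ext_iff]
    obtain ⟨j, hj⟩ := exists_ne i
    obtain ⟨p, q, hpq⟩ := hI j
    obtain ⟨z⟩ : Nonempty (∀ k, I k) := ⟨fun k => (hne k).some⟩
    set a : ∀ k, I k := Function.update (Function.update z j p) i x with ha
    set a' : ∀ k, I k := Function.update (Function.update z j q) i x' with ha'
    have hai : a i = x := by simp [ha]
    have ha'i : a' i = x' := by simp [ha']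
    have haj : a j = p := by simp [ha, Function.update_of_ne hj]
    have ha'j : a' j = q := by simp [ha', Function.update_of_ne hj]
    set B : Set ((∀ k, I k) × O) := V ∪ {(a, f a), (a', f a')} with hB
    have hBg : B ⊆ graphOf f := by
      intro w hw
      rcases hw with hw | hw
      · exact hVg hw
      · rcases hw with hw | hw <;> subst hw <;> rfl
    have hmem : (a, f a) ∈ B := Or.inr (Or.inl rfl)
    have hmem' : (a', f a') ∈ B := Or.inr (Or.inr rfl)
    have hphi := hV B Set.subset_union_left hBg
    obtain ⟨v, hv, v', hv', hvi, hv'i, hvk, -⟩ :=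
      hphi i (a, f a) hmem (a', f a') hmem' (by simpa [hai, ha'i] using hxx')
    have hvfst : v.1 = a := by
      rcases hv with hv | hv
      · exact absurd ⟨v, hv, hvi.trans hai⟩ hx
      · rcases hv with hv | hv
        · rw [hv]
        · exfalso
          have h2 : a' i = a i := by rw [hv] at hvi; exact hvi
          rw [hai, ha'i] at h2
          exact hxx' h2.symm
    have hv'fst : v'.1 = a' := by
      rcases hv' with hv' | hv'
      · exact absurd ⟨v', hv', hv'i.trans ha'i⟩ hx'
      · rcases hv' with hv' | hv'
        · exfalso
          have h2 : a i = a' i := by rw [hv'] at hv'i; exact hv'i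
          rw [hai, ha'i] at h2
          exact hxx' h2
        · rw [hv']
    have := hvk j hj
    rw [hvfst, hv'fst, haj, ha'j] at this
    exact hpq this
  · intro hFin U hUfin hUg
    have hg : graphOf f = Set.range (fun x => (x, f x)) := by
      ext ⟨a, b⟩
      simp only [graphOf, Set.mem_setOf_eq, Set.mem_range, Prod.mk.injEq]
      constructor
      · intro hb; exact ⟨a, rfl, hb.symm⟩
      · rintro ⟨c, rfl, rfl⟩; rfl
    refine ⟨graphOf f, hUg, subset_rfl, by rw [hg]; exact Set.finite_range _, ?_⟩
    intro B hB1 hB2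
    have hBeq : B = graphOf f := Set.Subset.antisymm hB2 hB1
    subst hBeq
    intro i u hu u' hu' hnei
    obtain ⟨z, hz⟩ := hf i (u.1 i) (u'.1 i) hnei
    refine ⟨(Function.update z i (u.1 i), f (Function.update z i (u.1 i))), rfl,
      (Function.update z i (u'.1 i), f (Function.update z i (u'.1 i))), rfl,
      by simp, by simp, ?_, hz⟩
    intro k hk
    simp [Function.update_of_ne hk]
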